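/- Let Γ = C_n be the directed cycle on [n] (n ≥ 3), with edges i → i±1 modulo n. Let v_1, v_2, …, v_m (m < n) be consecutive distinct vertices in cyclic order around the cycle, let 1 ≤ p < q ≤ m, and set i = v_p, j = v_q, I = {v_1,…,v_{p−1}}, J = {v_{p+1},…,v_{q−1}}, K = {v_{q+1},…,v_m} (any of which may be empty, with Y_∅ = 1). Then Y_{I∪{i}∪J} · Y_{J∪{j}∪K} = Y_J · Y_{I∪{i}∪J∪{j}∪K} + Y_I · Y_K. -/

import Mathlib

open MvPolynomial

/-- The ambient field: rational functions in the indeterminates `A_1,…,A_n,X_1,…,X_n`. -/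
abbrev Kn (n : ℕ) : Type := FractionRing (MvPolynomial (Fin n ⊕ Fin n) ℤ)

/-- The coefficient `A_i`, as an element of the ambient field. -/
noncomputable def AA {n : ℕ} (i : Fin n) : Kn n :=
  algebraMap (MvPolynomial (Fin n ⊕ Fin n) ℤ) (Kn n) (X (Sum.inl i))

/-- The initial cluster variable `X_i`, as an element of the ambient field. -/
noncomputable def XX {n : ℕ} (i : Fin n) : Kn n :=
  algebraMap (MvPolynomial (Fin n ⊕ Fin n) ℤ) (Kn n) (X (Sum.inr i))

/-- `f` is acyclic on `I`: the only directed cycles in the graph `{i → f(i) : i ∈ I}`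
are loops at fixed points. -/
def IsAcyclicOn {n : ℕ} (I : Finset (Fin n)) (f : Fin n → Fin n) : Prop :=
  ∀ i ∈ I, ∀ k : ℕ, 0 < k → (∀ r < k, f^[r] i ∈ I) → f^[k] i = i → f i = i

open Classical in
/-- The numerator `N_I` of `Y_I`: the generating function of acyclic functions `f : I → [n]`
(encoded as functions `Fin n → Fin n` fixing every vertex outside `I`), where a fixed point
`i ∈ I` contributes `A_i` and a non-fixed point contributes `X_{f i}`. -/
noncomputable def Ynum {n : ℕ} (E : Fin n → Fin n → Prop) (I : Finset (Fin n)) :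
    MvPolynomial (Fin n ⊕ Fin n) ℤ :=
  ∑ f : Fin n → Fin n,
    if (∀ i, i ∉ I → f i = i) ∧ (∀ i ∈ I, f i = i ∨ E i (f i)) ∧ IsAcyclicOn I f then
      ∏ i ∈ I, if f i = i then X (Sum.inl i) else X (Sum.inr (f i))
    else 0

/-- The Laurent polynomial `Y_I` (with `Y_∅ = 1`). -/
noncomputable def YY {n : ℕ} (E : Fin n → Fin n → Prop) (I : Finset (Fin n)) : Kn n :=
  algebraMap (MvPolynomial (Fin n ⊕ Fin n) ℤ) (Kn n) (Ynum E I) / ∏ i ∈ I, XX i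

open Classical in
/-- `P_S^{i,j}`: the sum of `Y_{S − p}` over all simple paths `p : i →_S j` in the graph,
whose intermediate vertices lie in `S`.  A path with `m` edges is encoded as an injective
map `v : Fin (m+1) → Fin n` whose consecutive values are edges. -/
noncomputable def PP {n : ℕ} (E : Fin n → Fin n → Prop) (S : Finset (Fin n)) (i j : Fin n) :
    Kn n :=
  ∑ m ∈ Finset.range (n + 1), ∑ v : Fin (m + 1) → Fin n,
    if Function.Injective v ∧ v 0 = i ∧ v (Fin.last m) = j ∧
        (∀ r : Fin m, E (v r.castSucc) (v r.succ)) ∧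
        (∀ r : Fin (m + 1), r ≠ 0 → r ≠ Fin.last m → v r ∈ S) then
      YY E (S \ Finset.image v Finset.univ)
    else 0

open Classical in
/-- The matrix `𝒴`, with diagonal entries `Y_{{i}}`, entries `−1` at edges of the graph,
and `0` elsewhere. -/
noncomputable def Ymat {n : ℕ} (E : Fin n → Fin n → Prop) : Matrix (Fin n) (Fin n) (Kn n) :=
  Matrix.of fun i j => if i = j then YY E {i} else if E i j then -1 else 0

/-- The doubly directed cycle `C_n` on `[n]`: edges `i → i ± 1 (mod n)`. -/
def cycE (n : ℕ) [NeZero n] : Fin n → Fin n → Prop :=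
  fun x y => y = x + 1 ∨ x = y + 1

namespace Stmt16Aux

open Function

variable {n : ℕ}

def P (E : Fin n → Fin n → Prop) (I : Finset (Fin n)) (f : Fin n → Fin n) : Prop :=
  (∀ i, i ∉ I → f i = i) ∧ (∀ i ∈ I, f i = i ∨ E i (f i)) ∧ IsAcyclicOn I f

noncomputable def wt (I : Finset (Fin n)) (f : Fin n → Fin n) :
    MvPolynomial (Fin n ⊕ Fin n) ℤ :=
  ∏ i ∈ I, if f i = i then X (Sum.inl i) else X (Sum.inr (f i))

open Classical in
lemma Ynum_eq (E : Fin n → Fin n → Prop) (I : Finset (Fin n)) :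
    Ynum E I = ∑ f : Fin n → Fin n, if P E I f then wt I f else 0 := by
  rw [Ynum]
  exact Finset.sum_congr rfl fun f _ => if_congr Iff.rfl rfl rfl

lemma iter_agree {α : Type*} {f g : α → α} {w i : α} (hfg : ∀ x, x ≠ w → f x = g x) :
    ∀ k, (∀ r, r < k → g^[r] i ≠ w) → f^[k] i = g^[k] i := by
  intro k
  induction k with
  | zero => intro _; rfl
  | succ k ih =>
    intro h
    rw [Function.iterate_succ_apply', Function.iterate_succ_apply',
      ih (fun r hr => h r (hr.trans (Nat.lt_succ_self k)))]
    exact hfg _ (h k (Nat.lt_succ_self k))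

lemma acy_erase {S : Finset (Fin n)} {f : Fin n → Fin n} (w : Fin n)
    (hac : IsAcyclicOn S f) : IsAcyclicOn (S.erase w) (Function.update f w w) := by
  intro i hi k hk hiter hcyc
  have hne : ∀ r, r < k → (Function.update f w w)^[r] i ≠ w := by
    intro r hr
    rcases Nat.eq_zero_or_pos r with h | _
    · subst h; exact (Finset.mem_erase.mp hi).1
    · exact (Finset.mem_erase.mp (hiter r hr)).1
  have hfg : ∀ x : Fin n, x ≠ w → f x = Function.update f w w x :=
    fun x hx => (Function.update_of_ne hx w f).symm
  have key : ∀ r, r ≤ k → f^[r] i = (Function.update f w w)^[r] i := fun r hr =>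
    iter_agree hfg r (fun s hs => hne s (lt_of_lt_of_le hs hr))
  have hfi : f i = i := by
    refine hac i (Finset.mem_of_mem_erase hi) k hk (fun r hr => ?_) ?_
    · rw [key r hr.le]; exact Finset.mem_of_mem_erase (hiter r hr)
    · rw [key k le_rfl]; exact hcyc
  rw [Function.update_of_ne (Finset.mem_erase.mp hi).1, hfi]

lemma iter_reduce {α : Type*} {f : α → α} {i : α} {k : ℕ} (hk : 0 < k) (hcyc : f^[k] i = i) :
    ∀ j, f^[j] i = f^[j % k] i := by
  intro j
  conv_lhs => rw [← Nat.mod_add_div j k]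
  rw [Function.iterate_add_apply, Function.iterate_mul, Function.iterate_fixed hcyc]

/-- Transfer acyclicity back along trajectories avoiding `w`. -/
lemma acy_back_nohit {S : Finset (Fin n)} {f : Fin n → Fin n} {w i : Fin n} {k : ℕ}
    (hac : IsAcyclicOn (S.erase w) (Function.update f w w))
    (hi : i ∈ S) (hk : 0 < k) (hiter : ∀ r, r < k → f^[r] i ∈ S) (hcyc : f^[k] i = i)
    (hnohit : ∀ r, r < k → f^[r] i ≠ w) : f i = i := by
  have hfg : ∀ x : Fin n, x ≠ w → Function.update f w w x = f x :=
    fun x hx => Function.update_of_ne hx w f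
  have key : ∀ r, r ≤ k → (Function.update f w w)^[r] i = f^[r] i := fun r hr =>
    iter_agree hfg r (fun s hs => hnohit s (lt_of_lt_of_le hs hr))
  have hiw : i ≠ w := by simpa using hnohit 0 hk
  have := hac i (Finset.mem_erase.mpr ⟨hiw, hi⟩) k hk (fun r hr => by
      rw [key r hr.le]
      exact Finset.mem_erase.mpr ⟨hnohit r hr, hiter r hr⟩)
    (by rw [key k le_rfl]; exact hcyc)
  rwa [Function.update_of_ne hiw] at this

lemma acyA_back {S : Finset (Fin n)} {w t : Fin n} {f : Fin n → Fin n}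
    (hfw : f w = t) (ht : t = w ∨ t ∉ S) (hfix : ∀ i, i ∉ S → f i = i)
    (hac : IsAcyclicOn (S.erase w) (Function.update f w w)) : IsAcyclicOn S f := by
  intro i hi k hk hiter hcyc
  by_cases hhit : ∃ r, r < k ∧ f^[r] i = w
  · rcases ht with h | htS
    · subst h
      by_cases hiw : i = t
      · subst hiw; exact hfw
      · exfalso
        obtain ⟨r, hr, hrw⟩ := hhit
        have hall : ∀ s, f^[r + s] i = t := by
          intro s
          induction s with
          | zero => simpa using hrw
          | succ s ihs =>
            rw [← Nat.add_assoc, Function.iterate_succ_apply', ihs, hfw]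
        have hkw : f^[k] i = t := by
          have h2 := hall (k - r)
          rwa [Nat.add_sub_cancel' hr.le] at h2
        exact hiw (hcyc ▸ hkw)
    · exfalso
      obtain ⟨r, hr, hrw⟩ := hhit
      have h1 : f^[r + 1] i = t := by
        rw [Function.iterate_succ_apply', hrw, hfw]
      rcases lt_or_eq_of_le (Nat.succ_le_of_lt hr) with h | h
      · exact htS (h1 ▸ hiter (r + 1) h)
      · have hti : t = i := by rw [← h1, show r + 1 = k from h, hcyc]
        exact htS (hti ▸ hi)
  · push_neg at hhit
    exact acy_back_nohit hac hi hk hiter hcyc hhit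

lemma acyB_back {E : Fin n → Fin n → Prop} {S : Finset (Fin n)} {w u : Fin n}
    {f : Fin n → Fin n}
    (hun : u ≠ w) (hfw : f w = u)
    (hedge : ∀ i ∈ S, f i = i ∨ E i (f i))
    (hin : ∀ i ∈ S, i ≠ w → E i w → i = u)
    (hfu : f u ≠ w)
    (hac : IsAcyclicOn (S.erase w) (Function.update f w w)) : IsAcyclicOn S f := by
  intro i hi k hk hiter hcyc
  by_cases hhit : ∃ r, r < k ∧ f^[r] i = w
  · exfalso
    obtain ⟨r, hr, hrw⟩ := hhit
    have hper : f^[r + k] i = w := by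
      rw [Function.iterate_add_apply, hcyc]; exact hrw
    obtain ⟨s, hs⟩ : ∃ s, r + k = s + 1 := ⟨r + k - 1, by omega⟩
    have hfx : f (f^[s] i) = w := by
      have h2 : f^[s + 1] i = w := by rw [← hs]; exact hper
      rwa [Function.iterate_succ_apply'] at h2
    have hxw : f^[s] i ≠ w := by
      intro h
      rw [h] at hfx
      exact hun (hfw ▸ hfx)
    have hxS : f^[s] i ∈ S := by
      rw [iter_reduce hk hcyc s]
      exact hiter _ (Nat.mod_lt _ hk)
    rcases hedge _ hxS with h | h
    · exact hxw (by rw [← h, hfx])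
    · rw [hfx] at h
      have := hin _ hxS hxw h
      exact hfu (this ▸ hfx)
  · push_neg at hhit
    exact acy_back_nohit hac hi hk hiter hcyc hhit

lemma fu_ne {S : Finset (Fin n)} {w u : Fin n} {f : Fin n → Fin n}
    (hw : w ∈ S) (hu : u ∈ S) (hun : u ≠ w) (hfw : f w = u)
    (hac : IsAcyclicOn S f) : f u ≠ w := by
  intro h
  have h2 : f^[2] w = w := by
    rw [show (2:ℕ) = 1 + 1 from rfl, Function.iterate_add_apply]
    simp [hfw, h]
  have := hac w hw 2 (by norm_num) (fun r hr => by
      interval_cases r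
      · simpa using hw
      · simpa [hfw] using hu) h2
  exact hun (hfw ▸ this)

end Stmt16Aux
namespace Stmt16Aux

variable {n : ℕ}

lemma P_erase {E : Fin n → Fin n → Prop} {S : Finset (Fin n)} {w : Fin n}
    {f : Fin n → Fin n} (hP : P E S f) : P E (S.erase w) (Function.update f w w) := by
  obtain ⟨hfix, hedge, hac⟩ := hP
  refine ⟨?_, ?_, acy_erase w hac⟩
  · intro i hi
    by_cases hiw : i = w
    · rw [hiw]; exact Function.update_self w w f
    · rw [Function.update_of_ne hiw]
      exact hfix i (fun hS => hi (Finset.mem_erase.mpr ⟨hiw, hS⟩))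
  · intro i hi
    have hiw := (Finset.mem_erase.mp hi).1
    rw [Function.update_of_ne hiw]
    exact hedge i (Finset.mem_of_mem_erase hi)

lemma update_cancel {α : Type*} {β : Type*} [DecidableEq α] {g : α → β} {w : α} {v : β}
    (hg : g w = v) : Function.update g w v = g := by
  rw [← hg, Function.update_eq_self]

lemma PA_back {E : Fin n → Fin n → Prop} {S : Finset (Fin n)} {w t : Fin n}
    {g : Fin n → Fin n} (hw : w ∈ S) (ht : t = w ∨ (t ∉ S ∧ E w t))
    (hg : P E (S.erase w) g) : P E S (Function.update g w t) := by
  obtain ⟨hfix, hedge, hac⟩ := hg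
  have hgww : g w = w := hfix w (Finset.notMem_erase w S)
  have hfw : Function.update g w t w = t := Function.update_self w t g
  have hback : Function.update (Function.update g w t) w w = g := by
    rw [Function.update_idem]; exact update_cancel hgww
  have hfix' : ∀ i, i ∉ S → Function.update g w t i = i := by
    intro i hi
    have hiw : i ≠ w := fun h => hi (h ▸ hw)
    rw [Function.update_of_ne hiw]
    exact hfix i (fun h => hi (Finset.mem_of_mem_erase h))
  refine ⟨hfix', ?_, ?_⟩
  · intro i hi
    by_cases hiw : i = w
    · subst hiw
      rcases ht with h | h
      · exact Or.inl (hfw.trans h)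
      · exact Or.inr (by rw [hfw]; exact h.2)
    · rw [Function.update_of_ne hiw]
      exact hedge i (Finset.mem_erase.mpr ⟨hiw, hi⟩)
  · refine acyA_back hfw ?_ hfix' (by rw [hback]; exact hac)
    rcases ht with h | h
    · exact Or.inl h
    · exact Or.inr h.1

lemma PB_back {E : Fin n → Fin n → Prop} {S : Finset (Fin n)} {w u : Fin n}
    {g : Fin n → Fin n} (hw : w ∈ S) (hun : u ≠ w) (hEwu : E w u)
    (hin : ∀ i ∈ S, i ≠ w → E i w → i = u)
    (hg : P E (S.erase w) g) (hgu : g u ≠ w) : P E S (Function.update g w u) := by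
  obtain ⟨hfix, hedge, hac⟩ := hg
  have hgww : g w = w := hfix w (Finset.notMem_erase w S)
  have hfw : Function.update g w u w = u := Function.update_self w u g
  have hback : Function.update (Function.update g w u) w w = g := by
    rw [Function.update_idem]; exact update_cancel hgww
  have hfix' : ∀ i, i ∉ S → Function.update g w u i = i := by
    intro i hi
    have hiw : i ≠ w := fun h => hi (h ▸ hw)
    rw [Function.update_of_ne hiw]
    exact hfix i (fun h => hi (Finset.mem_of_mem_erase h))
  have hedge' : ∀ i ∈ S, Function.update g w u i = i ∨ E i (Function.update g w u i) := by
    intro i hi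
    by_cases hiw : i = w
    · subst hiw
      exact Or.inr (by rw [hfw]; exact hEwu)
    · rw [Function.update_of_ne hiw]
      exact hedge i (Finset.mem_erase.mpr ⟨hiw, hi⟩)
  refine ⟨hfix', hedge', ?_⟩
  refine acyB_back hun hfw hedge' hin ?_ (by rw [hback]; exact hac)
  rw [Function.update_of_ne hun]
  exact hgu

lemma wt_erase {S : Finset (Fin n)} {w t : Fin n} {f : Fin n → Fin n}
    (hw : w ∈ S) (hfw : f w = t) :
    wt S f = (if t = w then X (Sum.inl w) else X (Sum.inr t)) *
      wt (S.erase w) (Function.update f w w) := by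
  rw [wt, wt, ← Finset.mul_prod_erase S _ hw]
  congr 1
  · rw [hfw]
  · exact Finset.prod_congr rfl fun i hi => by
      rw [Function.update_of_ne (Finset.mem_erase.mp hi).1]

open Classical in
lemma sumA {E : Fin n → Fin n → Prop} {S : Finset (Fin n)} {w t : Fin n}
    (hw : w ∈ S) (ht : t = w ∨ (t ∉ S ∧ E w t)) :
    (∑ f : Fin n → Fin n, if f w = t ∧ P E S f then wt S f else 0)
      = (if t = w then X (Sum.inl w) else X (Sum.inr t)) * Ynum E (S.erase w) := by
  rw [Ynum_eq, Finset.mul_sum]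
  simp only [mul_ite, mul_zero]
  rw [← Finset.sum_filter, ← Finset.sum_filter]
  refine Finset.sum_bij' (fun f _ => Function.update f w w)
    (fun g _ => Function.update g w t) ?_ ?_ ?_ ?_ ?_
  · intro f hf
    rw [Finset.mem_filter] at hf ⊢
    exact ⟨Finset.mem_univ _, P_erase hf.2.2⟩
  · intro g hg
    rw [Finset.mem_filter] at hg ⊢
    exact ⟨Finset.mem_univ _, Function.update_self w t g, PA_back hw ht hg.2⟩
  · intro f hf
    rw [Finset.mem_filter] at hf
    rw [Function.update_idem]; exact update_cancel hf.2.1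
  · intro g hg
    rw [Finset.mem_filter] at hg
    have hgww : g w = w := hg.2.1 w (Finset.notMem_erase w S)
    rw [Function.update_idem]; exact update_cancel hgww
  · intro f hf
    rw [Finset.mem_filter] at hf
    exact wt_erase hw hf.2.1

open Classical in
lemma sumB {E : Fin n → Fin n → Prop} {S : Finset (Fin n)} {w u : Fin n}
    (hw : w ∈ S) (hu : u ∈ S) (hun : u ≠ w) (hEwu : E w u) (hEuw : E u w)
    (hin : ∀ i ∈ S, i ≠ w → E i w → i = u) :
    (∑ f : Fin n → Fin n, if f w = u ∧ P E S f then wt S f else 0)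
      = X (Sum.inr u) * Ynum E (S.erase w)
        - X (Sum.inr u) * X (Sum.inr w) * Ynum E ((S.erase w).erase u) := by
  have step1 : (∑ f : Fin n → Fin n, if f w = u ∧ P E S f then wt S f else 0)
      = X (Sum.inr u) * ∑ g : Fin n → Fin n,
          if P E (S.erase w) g ∧ g u ≠ w then wt (S.erase w) g else 0 := by
    rw [Finset.mul_sum]
    simp only [mul_ite, mul_zero]
    rw [← Finset.sum_filter, ← Finset.sum_filter]
    refine Finset.sum_bij' (fun f _ => Function.update f w w)
      (fun g _ => Function.update g w u) ?_ ?_ ?_ ?_ ?_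
    · intro f hf
      rw [Finset.mem_filter] at hf ⊢
      refine ⟨Finset.mem_univ _, P_erase hf.2.2, ?_⟩
      rw [Function.update_of_ne hun]
      exact fu_ne hw hu hun hf.2.1 hf.2.2.2.2
    · intro g hg
      rw [Finset.mem_filter] at hg ⊢
      exact ⟨Finset.mem_univ _, Function.update_self w u g,
        PB_back hw hun hEwu hin hg.2.1 hg.2.2⟩
    · intro f hf
      rw [Finset.mem_filter] at hf
      rw [Function.update_idem]; exact update_cancel hf.2.1
    · intro g hg
      rw [Finset.mem_filter] at hg
      have hgww : g w = w := hg.2.1.1 w (Finset.notMem_erase w S)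
      rw [Function.update_idem]; exact update_cancel hgww
    · intro f hf
      rw [Finset.mem_filter] at hf
      have := wt_erase hw hf.2.1
      rwa [if_neg hun] at this
  have step3 : (∑ g : Fin n → Fin n,
        if g u = w ∧ P E (S.erase w) g then wt (S.erase w) g else 0)
      = X (Sum.inr w) * Ynum E ((S.erase w).erase u) := by
    have := sumA (E := E) (S := S.erase w) (w := u) (t := w)
      (Finset.mem_erase.mpr ⟨hun, hu⟩)
      (Or.inr ⟨Finset.notMem_erase w S, hEuw⟩)
    rwa [if_neg (fun h => hun h.symm)] at this
  have step2 : (∑ g : Fin n → Fin n,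
        if P E (S.erase w) g ∧ g u ≠ w then wt (S.erase w) g else 0)
      = Ynum E (S.erase w) - ∑ g : Fin n → Fin n,
          if g u = w ∧ P E (S.erase w) g then wt (S.erase w) g else 0 := by
    rw [Ynum_eq, eq_sub_iff_add_eq, ← Finset.sum_add_distrib]
    refine Finset.sum_congr rfl fun g _ => ?_
    by_cases hP : P E (S.erase w) g
    · by_cases hgu : g u = w
      · rw [if_neg (fun h => h.2 hgu), if_pos ⟨hgu, hP⟩, if_pos hP, zero_add]
      · rw [if_pos ⟨hP, hgu⟩, if_neg (fun h => hgu h.1), if_pos hP, add_zero]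
    · rw [if_neg (fun h => hP h.1), if_neg (fun h => hP h.2), if_neg hP, add_zero]
  rw [step1, step2, step3]
  ring

end Stmt16Aux
namespace Stmt16Aux

variable {n : ℕ}

lemma Ynum_empty (E : Fin n → Fin n → Prop) : Ynum E (∅ : Finset (Fin n)) = 1 := by
  classical
  rw [Ynum_eq]
  rw [Finset.sum_eq_single (id : Fin n → Fin n)]
  · rw [if_pos ?_, wt, Finset.prod_empty]
    refine ⟨fun i _ => rfl, fun i hi => absurd hi (Finset.notMem_empty i), ?_⟩
    intro i hi
    exact absurd hi (Finset.notMem_empty i)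
  · intro f _ hf
    rw [if_neg]
    intro hP
    exact hf (funext fun i => hP.1 i (Finset.notMem_empty i))
  · intro h
    exact absurd (Finset.mem_univ _) h

open Classical in
lemma Ynum_split {E : Fin n → Fin n → Prop} {S : Finset (Fin n)} {w v u : Fin n}
    (hw : w ∈ S) (hvw : v ≠ w) (huw : u ≠ w) (hvu : v ≠ u)
    (hEw : ∀ s, E w s → s = v ∨ s = u) :
    Ynum E S = (∑ f : Fin n → Fin n, if f w = w ∧ P E S f then wt S f else 0)
      + ((∑ f : Fin n → Fin n, if f w = v ∧ P E S f then wt S f else 0)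
      + (∑ f : Fin n → Fin n, if f w = u ∧ P E S f then wt S f else 0)) := by
  rw [Ynum_eq, ← Finset.sum_add_distrib, ← Finset.sum_add_distrib]
  refine Finset.sum_congr rfl fun f _ => ?_
  by_cases hP : P E S f
  · rcases hP.2.1 w hw with h | h
    · rw [if_pos hP, if_pos ⟨h, hP⟩, if_neg (fun hc => hvw (hc.1.symm.trans h)),
        if_neg (fun hc => huw (hc.1.symm.trans h)), add_zero, add_zero]
    · rcases hEw _ h with h' | h'
      · rw [if_pos hP, if_neg (fun hc => hvw (h'.symm.trans hc.1)),
          if_pos ⟨h', hP⟩, if_neg (fun hc => hvu (h'.symm.trans hc.1)),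
          add_zero, zero_add]
      · rw [if_pos hP, if_neg (fun hc => huw (h'.symm.trans hc.1)),
          if_neg (fun hc => hvu (hc.1.symm.trans h')),
          if_pos ⟨h', hP⟩, zero_add, zero_add]
  · rw [if_neg hP, if_neg (fun hc => hP hc.2), if_neg (fun hc => hP hc.2),
      if_neg (fun hc => hP hc.2), add_zero, add_zero]

lemma Ynum_singleton {E : Fin n → Fin n → Prop} {w v u : Fin n}
    (hvw : v ≠ w) (huw : u ≠ w) (hvu : v ≠ u)
    (hEv : E w v) (hEu : E w u) (hEw : ∀ s, E w s → s = v ∨ s = u) :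
    Ynum E {w} = X (Sum.inl w) + X (Sum.inr v) + X (Sum.inr u) := by
  classical
  have hmem : w ∈ ({w} : Finset (Fin n)) := Finset.mem_singleton_self w
  rw [Ynum_split hmem hvw huw hvu hEw,
    sumA hmem (Or.inl rfl),
    sumA hmem (Or.inr ⟨by simp [hvw], hEv⟩),
    sumA hmem (Or.inr ⟨by simp [huw], hEu⟩),
    if_pos rfl, if_neg hvw, if_neg huw]
  have : ({w} : Finset (Fin n)).erase w = ∅ := Finset.erase_singleton w
  rw [this, Ynum_empty, mul_one, mul_one, mul_one, add_assoc]

lemma Ynum_rec {E : Fin n → Fin n → Prop} {S : Finset (Fin n)} {w v u : Fin n}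
    (hw : w ∈ S) (hu : u ∈ S) (hun : u ≠ w) (hv : v ∉ S) (hvu : v ≠ u)
    (hEwv : E w v) (hEwu : E w u) (hEuw : E u w)
    (hEw : ∀ s, E w s → s = v ∨ s = u)
    (hin : ∀ i ∈ S, i ≠ w → E i w → i = u) :
    Ynum E S = (X (Sum.inl w) + X (Sum.inr v) + X (Sum.inr u)) * Ynum E (S.erase w)
      - X (Sum.inr u) * X (Sum.inr w) * Ynum E ((S.erase w).erase u) := by
  classical
  have hvw : v ≠ w := fun h => hv (h ▸ hw)
  rw [Ynum_split hw hvw hun hvu hEw, sumA hw (Or.inl rfl), sumA hw (Or.inr ⟨hv, hEwv⟩),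
    sumB hw hu hun hEwu hEuw hin, if_pos rfl, if_neg hvw]
  ring

lemma XX_ne_zero (i : Fin n) : (XX i : Kn n) ≠ 0 := by
  rw [XX, Ne, IsFractionRing.to_map_eq_zero_iff]
  exact MvPolynomial.X_ne_zero _

lemma prod_XX_ne_zero (S : Finset (Fin n)) : (∏ i ∈ S, XX i : Kn n) ≠ 0 :=
  Finset.prod_ne_zero_iff.mpr fun i _ => XX_ne_zero i

lemma YY_empty (E : Fin n → Fin n → Prop) : YY E (∅ : Finset (Fin n)) = 1 := by
  rw [YY, Ynum_empty, Finset.prod_empty, map_one, div_one]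

set_option synthInstance.maxHeartbeats 1000000 in
set_option maxHeartbeats 1000000 in
lemma YY_rec {E : Fin n → Fin n → Prop} {S : Finset (Fin n)} {w v u : Fin n}
    (hw : w ∈ S) (hu : u ∈ S) (hun : u ≠ w) (hv : v ∉ S) (hvu : v ≠ u)
    (hEwv : E w v) (hEwu : E w u) (hEuw : E u w)
    (hEw : ∀ s, E w s → s = v ∨ s = u)
    (hin : ∀ i ∈ S, i ≠ w → E i w → i = u) :
    YY E S = YY E {w} * YY E (S.erase w) - YY E ((S.erase w).erase u) := by
  classical
  have hvw : v ≠ w := fun h => hv (h ▸ hw)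
  have hu' : u ∈ S.erase w := Finset.mem_erase.mpr ⟨hun, hu⟩
  have hP2 : (∏ i ∈ (S.erase w).erase u, XX i : Kn n) ≠ 0 := prod_XX_ne_zero _
  have hXw := XX_ne_zero (n := n) w
  have hXu := XX_ne_zero (n := n) u
  have hprodS : (∏ i ∈ S, XX i : Kn n) = XX w * (XX u * ∏ i ∈ (S.erase w).erase u, XX i) := by
    rw [Finset.mul_prod_erase _ _ hu', Finset.mul_prod_erase _ _ hw]
  have hprodS' : (∏ i ∈ S.erase w, XX i : Kn n) = XX u * ∏ i ∈ (S.erase w).erase u, XX i :=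
    (Finset.mul_prod_erase _ _ hu').symm
  rw [YY, YY, YY, YY, Ynum_rec hw hu hun hv hvu hEwv hEwu hEuw hEw hin,
    Ynum_singleton hvw hun hvu hEwv hEwu hEw, Finset.prod_singleton,
    hprodS, hprodS', map_sub, map_mul, map_add, map_add, map_mul, map_mul]
  have hXX : ∀ i : Fin n,
      algebraMap (MvPolynomial (Fin n ⊕ Fin n) ℤ) (Kn n) (X (Sum.inr i)) = XX i :=
    fun _ => rfl
  simp only [hXX]
  field_simp

end Stmt16Aux
namespace Stmt16Aux

lemma continuant {R : Type*} [CommRing R] (y : ℕ → R) (D : ℕ → ℕ → R) (M : ℕ)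
    (h0 : ∀ a b, b ≤ a → D a b = 1)
    (h1 : ∀ a, D a (a + 1) = y a)
    (h2 : ∀ a b, 1 ≤ a → a ≤ b → b + 1 ≤ M → D a (b + 2) = y (b + 1) * D a (b + 1) - D a b)
    (p q : ℕ) (hp : 1 ≤ p) (hpq : p < q) :
    ∀ m, q ≤ m → m ≤ M →
      D 1 q * D (p + 1) (m + 1) = D (p + 1) q * D 1 (m + 1) + D 1 p * D (q + 1) (m + 1) := by
  have W : ∀ b, p + 1 ≤ b → b ≤ M →
      D 1 (b + 1) * D (p + 1) b - D 1 b * D (p + 1) (b + 1) = - D 1 p := by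
    intro b hb
    induction b, hb using Nat.le_induction with
    | base =>
      intro hM
      rw [h0 (p + 1) (p + 1) le_rfl, h1 (p + 1)]
      linear_combination h2 1 p le_rfl hp hM
    | succ b hpb ihW =>
      intro hM
      have ihW' := ihW (by omega)
      have e1 := h2 1 b le_rfl (by omega) (by omega)
      have e2 := h2 (p + 1) b (by omega) hpb (by omega)
      linear_combination D (p + 1) (b + 1) * e1 - D 1 (b + 1) * e2 + ihW'
  have Eq0 : q ≤ M → D 1 q * D (p + 1) (q + 1) = D (p + 1) q * D 1 (q + 1) + D 1 p := by
    intro hqM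
    rcases Nat.lt_or_ge q (p + 2) with h | h
    · have hq1 : q = p + 1 := by omega
      subst hq1
      rw [h0 (p + 1) (p + 1) le_rfl, h1 (p + 1)]
      linear_combination - h2 1 p le_rfl hp hqM
    · obtain ⟨t, rfl⟩ : ∃ t, q = t + 2 := ⟨q - 2, by omega⟩
      have e1 := h2 1 (t + 1) le_rfl (by omega) (by omega)
      have e2 := h2 (p + 1) (t + 1) (by omega) (by omega) (by omega)
      have eW := W (t + 1) (by omega) (by omega)
      linear_combination D 1 (t + 2) * e2 - D (p + 1) (t + 2) * e1 - eW
  intro m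
  induction m using Nat.strong_induction_on with
  | _ m ih =>
    intro hqm hmM
    rcases Nat.lt_or_ge m (q + 2) with hm | hm
    · rcases (by omega : q = m ∨ q + 1 = m) with h | h
      all_goals subst h
      · rw [h0 (q + 1) (q + 1) le_rfl]
        linear_combination Eq0 hmM
      · have e1 := h2 1 q le_rfl (by omega) (by omega)
        have e2 := h2 (p + 1) q (by omega) (by omega) (by omega)
        have e3 := h1 (q + 1)
        linear_combination D 1 q * e2 - D (p + 1) q * e1 - D 1 p * e3 +
          y (q + 1) * Eq0 (by omega)
    · obtain ⟨t, rfl⟩ : ∃ t, m = t + 2 := ⟨m - 2, by omega⟩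
      have e1 := h2 1 (t + 1) le_rfl (by omega) (by omega)
      have e2 := h2 (p + 1) (t + 1) (by omega) (by omega) (by omega)
      have e3 := h2 (q + 1) (t + 1) (by omega) (by omega) (by omega)
      have ih1 := ih (t + 1) (by omega) (by omega) (by omega)
      have ih2 := ih t (by omega) (by omega) (by omega)
      linear_combination D 1 q * e2 - D (p + 1) q * e1 - D 1 p * e3 +
        y (t + 2) * ih1 - ih2

end Stmt16Aux
namespace Stmt16Aux

variable {n : ℕ}

open Fin.NatCast

lemma cast_inj_lt [NeZero n] {r s : ℕ} (hr : r < n) (hs : s < n)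
    (h : (r : Fin n) = s) : r = s := by
  have := congrArg Fin.val h
  rwa [Fin.val_cast_of_lt hr, Fin.val_cast_of_lt hs] at this

lemma mem_img [NeZero n] {c : Fin n} {a b s : ℕ} (ha : 1 ≤ a) (hb : b ≤ n) (hs : s < n) :
    (c + (s : Fin n) ∈ (Finset.Ico a b).image (fun r : ℕ => c + (r : Fin n)))
      ↔ (a ≤ s ∧ s < b) := by
  simp only [Finset.mem_image, Finset.mem_Ico]
  constructor
  · rintro ⟨r, ⟨har, hrb⟩, hcr⟩
    have h1 : (r : Fin n) = s := add_left_cancel hcr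
    have h2 := cast_inj_lt (lt_of_lt_of_le hrb hb) hs h1
    omega
  · intro h
    exact ⟨s, ⟨h.1, h.2⟩, rfl⟩

lemma img_succ [NeZero n] {c : Fin n} {a b : ℕ} (hab : a ≤ b) :
    (Finset.Ico a (b + 1)).image (fun r : ℕ => c + (r : Fin n))
      = insert (c + (b : Fin n)) ((Finset.Ico a b).image fun r : ℕ => c + (r : Fin n)) := by
  ext x
  simp only [Finset.mem_image, Finset.mem_insert, Finset.mem_Ico]
  constructor
  · rintro ⟨r, ⟨h1, h2⟩, rfl⟩
    rcases Nat.lt_or_ge r b with h | h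
    · exact Or.inr ⟨r, ⟨h1, h⟩, rfl⟩
    · have hrb : r = b := by omega
      subst hrb
      exact Or.inl rfl
  · rintro (rfl | ⟨r, ⟨h1, h2⟩, rfl⟩)
    · exact ⟨b, ⟨by omega, by omega⟩, rfl⟩
    · exact ⟨r, ⟨h1, by omega⟩, rfl⟩

open Fin.CommRing in
lemma D_rec [NeZero n] (hn : 3 ≤ n) (c : Fin n) (a b : ℕ) (ha : 1 ≤ a) (hab : a ≤ b)
    (hbn : b + 2 ≤ n) :
    YY (cycE n) ((Finset.Ico a (b + 2)).image fun r : ℕ => c + (r : Fin n))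
      = YY (cycE n) {c + ((b + 1 : ℕ) : Fin n)}
          * YY (cycE n) ((Finset.Ico a (b + 1)).image fun r : ℕ => c + (r : Fin n))
        - YY (cycE n) ((Finset.Ico a b).image fun r : ℕ => c + (r : Fin n)) := by
  set w : Fin n := c + ((b + 1 : ℕ) : Fin n) with hwdef
  set u : Fin n := c + ((b : ℕ) : Fin n) with hudef
  set S := (Finset.Ico a (b + 2)).image fun r : ℕ => c + (r : Fin n) with hSdef
  have hwu : w = u + 1 := by rw [hwdef, hudef]; push_cast; ring
  have hw : w ∈ S := by
    rw [hSdef]; exact (mem_img ha (by omega) (by omega)).mpr ⟨by omega, by omega⟩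
  have hu : u ∈ S := by
    rw [hSdef]; exact (mem_img ha (by omega) (by omega)).mpr ⟨by omega, by omega⟩
  have hun : u ≠ w := by
    intro h
    rw [hudef, hwdef] at h
    have := cast_inj_lt (by omega : b < n) (by omega : b + 1 < n) (add_left_cancel h)
    omega
  have hv : w + 1 ∉ S := by
    have hv2 : w + 1 = c + ((b + 2 : ℕ) : Fin n) := by rw [hwdef]; push_cast; ring
    rw [hv2, hSdef]
    rcases eq_or_lt_of_le hbn with h | h
    · have h0 : ((b + 2 : ℕ) : Fin n) = ((0 : ℕ) : Fin n) := by
        rw [h, Fin.natCast_self, Nat.cast_zero]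
      rw [h0]
      intro hmem
      have := (mem_img ha (by omega) (by omega : 0 < n)).mp hmem
      omega
    · intro hmem
      have := (mem_img ha (by omega) h).mp hmem
      omega
  have h2ne : ((2 : ℕ) : Fin n) ≠ 0 := by
    intro h
    have := congrArg Fin.val h
    rw [Fin.val_cast_of_lt (by omega : 2 < n), Fin.val_zero] at this
    omega
  have hvu : w + 1 ≠ u := by
    intro h
    rw [hwu] at h
    have h2eq : ((2 : ℕ) : Fin n) = 1 + 1 := by push_cast; ring
    have h' : u + (1 + 1) = u + 0 := by rw [add_zero, ← add_assoc]; exact h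
    exact h2ne (by rw [h2eq]; exact add_left_cancel h')
  have hEwv : cycE n w (w + 1) := Or.inl rfl
  have hEwu : cycE n w u := Or.inr hwu
  have hEuw : cycE n u w := Or.inl hwu
  have hEw : ∀ s, cycE n w s → s = w + 1 ∨ s = u := by
    rintro s (h | h)
    · exact Or.inl h
    · exact Or.inr (add_right_cancel ((h.symm.trans hwu : s + 1 = u + 1)))
  have hin : ∀ i ∈ S, i ≠ w → cycE n i w → i = u := by
    rintro i hi hiw (h | h)
    · exact add_right_cancel (h.symm.trans hwu : i + 1 = u + 1)
    · exact absurd (h ▸ hi) hv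
  have hrec := YY_rec hw hu hun hv hvu hEwv hEwu hEuw hEw hin
  have hwT : w ∉ (Finset.Ico a (b + 1)).image fun r : ℕ => c + (r : Fin n) := by
    rw [hwdef]
    intro hmem
    have := (mem_img ha (by omega) (by omega : b + 1 < n)).mp hmem
    omega
  have huT : u ∉ (Finset.Ico a b).image fun r : ℕ => c + (r : Fin n) := by
    rw [hudef]
    intro hmem
    have := (mem_img ha (by omega) (by omega : b < n)).mp hmem
    omega
  have hSw : S.erase w = (Finset.Ico a (b + 1)).image fun r : ℕ => c + (r : Fin n) := by
    rw [hSdef, show b + 2 = (b + 1) + 1 from rfl, img_succ (by omega : a ≤ b + 1),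
      ← hwdef, Finset.erase_insert hwT]
  have hSwu : ((S.erase w).erase u) = (Finset.Ico a b).image fun r : ℕ => c + (r : Fin n) := by
    rw [hSw, img_succ hab, ← hudef, Finset.erase_insert huT]
  rw [hrec, hSwu, hSw]

end Stmt16Aux

open Fin.NatCast in
/-- For the cycle `C_n` (`n ≥ 3`) and consecutive vertices `v_1,…,v_m` (`m < n`) in cyclic
order starting after `c`, with `1 ≤ p < q ≤ m`, `i = v_p`, `j = v_q`,
`I = {v_1,…,v_{p−1}}`, `J = {v_{p+1},…,v_{q−1}}`, `K = {v_{q+1},…,v_m}`: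
`Y_{I∪{i}∪J} · Y_{J∪{j}∪K} = Y_J · Y_{I∪{i}∪J∪{j}∪K} + Y_I · Y_K`. -/
theorem stmt16 (n : ℕ) [NeZero n] (hn : 3 ≤ n) (c : Fin n) (m p q : ℕ)
    (hmn : m < n) (hp : 1 ≤ p) (hpq : p < q) (hq : q ≤ m) :
    YY (cycE n) ((Finset.Ico 1 q).image fun r : ℕ => c + (r : Fin n)) *
        YY (cycE n) ((Finset.Ioc p m).image fun r : ℕ => c + (r : Fin n)) =
      YY (cycE n) ((Finset.Ioo p q).image fun r : ℕ => c + (r : Fin n)) *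
          YY (cycE n) ((Finset.Icc 1 m).image fun r : ℕ => c + (r : Fin n)) +
        YY (cycE n) ((Finset.Ico 1 p).image fun r : ℕ => c + (r : Fin n)) *
          YY (cycE n) ((Finset.Ioc q m).image fun r : ℕ => c + (r : Fin n)) := by
  have hIoc1 : Finset.Ioc p m = Finset.Ico (p + 1) (m + 1) := (Finset.Ico_add_one_add_one_eq_Ioc p m).symm
  have hIoo : Finset.Ioo p q = Finset.Ico (p + 1) q := (Finset.Ico_add_one_left_eq_Ioo p q).symm
  have hIcc : Finset.Icc 1 m = Finset.Ico 1 (m + 1) := (Finset.Ico_add_one_right_eq_Icc 1 m).symm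
  have hIoc2 : Finset.Ioc q m = Finset.Ico (q + 1) (m + 1) := (Finset.Ico_add_one_add_one_eq_Ioc q m).symm
  rw [hIoc1, hIoo, hIcc, hIoc2]
  refine Stmt16Aux.continuant (fun r => YY (cycE n) {c + (r : Fin n)})
    (fun a b => YY (cycE n) ((Finset.Ico a b).image fun r : ℕ => c + (r : Fin n)))
    (n - 1) ?_ ?_ ?_ p q hp hpq m hq (by omega)
  · intro a b hba
    show YY (cycE n) ((Finset.Ico a b).image fun r : ℕ => c + (r : Fin n)) = 1
    rw [Finset.Ico_eq_empty (by omega), Finset.image_empty, Stmt16Aux.YY_empty]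
  · intro a
    show YY (cycE n) ((Finset.Ico a (a + 1)).image fun r : ℕ => c + (r : Fin n))
      = YY (cycE n) {c + (a : Fin n)}
    rw [Nat.Ico_succ_singleton, Finset.image_singleton]
  · intro a b ha hab hbM
    exact Stmt16Aux.D_rec hn c a b ha hab (by omega)
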